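/- Let G be a connected graph with at least 5 vertices that is not 2-connected. Then either there exists a set S of at most 2 vertices of G such that G − S is 2-connected, or there exists a set S' of at most 2 vertices such that the complement of G minus S' is 2-connected. -/

import Mathlib

open SimpleGraph

/-- A graph is 2-connected: it is connected, has at least 3 vertices, and removing
any single vertex leaves it connected. -/
def TwoConnected {W : Type*} (H : SimpleGraph W) : Prop :=
  H.Connected ∧ 3 ≤ Nat.card W ∧ ∀ w : W, (H.induce {w}ᶜ).Connected

section Helpers

variable {V : Type*}

private lemma connected_induce_of_hub (G : SimpleGraph V) (t : Set V) (a : V) (ha : a ∈ t)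
    (hhub : ∀ x ∈ t, x ≠ a → G.Adj a x) : (G.induce t).Connected := by
  rw [connected_iff_exists_forall_reachable]
  refine ⟨⟨a, ha⟩, ?_⟩
  rintro ⟨x, hx⟩
  rcases eq_or_ne x a with rfl | hxa
  · rfl
  · exact (SimpleGraph.Adj.reachable (show (G.induce t).Adj ⟨a, ha⟩ ⟨x, hx⟩ from
      hhub x hx hxa))

private lemma connected_induce_of_bipartite (G : SimpleGraph V) {t A B : Set V}
    (hs : A ∪ B = t) (hA : A.Nonempty) (hB : B.Nonempty)
    (hadj : ∀ x ∈ A, ∀ y ∈ B, G.Adj x y) : (G.induce t).Connected := by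
  obtain ⟨a0, ha0⟩ := hA
  obtain ⟨b0, hb0⟩ := hB
  have ha0t : a0 ∈ t := hs ▸ Or.inl ha0
  have hb0t : b0 ∈ t := hs ▸ Or.inr hb0
  rw [connected_iff_exists_forall_reachable]
  refine ⟨⟨a0, ha0t⟩, ?_⟩
  rintro ⟨x, hx⟩
  have hx' : x ∈ A ∨ x ∈ B := by rw [← hs] at hx; exact hx
  rcases hx' with h | h
  · have h1 : (G.induce t).Adj ⟨a0, ha0t⟩ ⟨b0, hb0t⟩ := hadj a0 ha0 b0 hb0
    have h2 : (G.induce t).Adj ⟨x, hx⟩ ⟨b0, hb0t⟩ := hadj x h b0 hb0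
    exact h1.reachable.trans h2.reachable.symm
  · exact (SimpleGraph.Adj.reachable (show (G.induce t).Adj ⟨a0, ha0t⟩ ⟨x, hx⟩ from
      hadj a0 ha0 x h))

private lemma exists_sep (G : SimpleGraph V) (t : Set V) (hne : t.Nonempty)
    (h : ¬ (G.induce t).Connected) :
    ∃ A B : Set V, A ∪ B = t ∧ A.Nonempty ∧ B.Nonempty ∧ Disjoint A B ∧
      ∀ x ∈ A, ∀ y ∈ B, ¬ G.Adj x y := by
  have hne' : Nonempty ↥t := hne.to_subtype
  have hpre : ¬ (G.induce t).Preconnected := by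
    intro hp; exact h ((connected_iff _).mpr ⟨hp, hne'⟩)
  rw [SimpleGraph.Preconnected] at hpre
  push_neg at hpre
  obtain ⟨u, w, huw⟩ := hpre
  classical
  set A : Set V := {z | ∃ hz : z ∈ t, (G.induce t).Reachable u ⟨z, hz⟩} with hAdef
  set B : Set V := {z | z ∈ t ∧ z ∉ A} with hBdef
  have hssub : A ⊆ t := fun z hz => hz.1
  refine ⟨A, B, ?_, ⟨u, u.2, by simpa using Reachable.refl u⟩,
    ⟨w, w.2, ?_⟩, ?_, ?_⟩
  · ext z
    constructor
    · rintro (hz | hz)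
      · exact hssub hz
      · exact hz.1
    · intro hz
      by_cases hzA : z ∈ A
      · exact Or.inl hzA
      · exact Or.inr ⟨hz, hzA⟩
  · rintro ⟨hz, hr⟩
    exact huw (by simpa using hr)
  · rw [Set.disjoint_left]
    intro z hzA hzB
    exact hzB.2 hzA
  · rintro x ⟨hx, hr⟩ y hy hadj
    refine hy.2 ⟨hy.1, hr.trans (SimpleGraph.Adj.reachable
      (show (G.induce t).Adj ⟨x, hx⟩ ⟨y, hy.1⟩ from hadj))⟩

private def induceDiffIso (G : SimpleGraph V) (s : Set V) {x : V} (hx : x ∈ s) :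
    G.induce (s \ {x}) ≃g (G.induce s).induce {(⟨x, hx⟩ : s)}ᶜ where
  toFun p := ⟨⟨p.1, p.2.1⟩, fun h => p.2.2 (congrArg Subtype.val h)⟩
  invFun q := ⟨q.1.1, ⟨q.1.2, fun h => q.2 (Subtype.ext h)⟩⟩
  left_inv p := rfl
  right_inv q := rfl
  map_rel_iff' := Iff.rfl

private lemma twoConnected_induce [Fintype V] (G : SimpleGraph V) (s : Set V)
    (h3 : 3 ≤ s.ncard) (h0 : (G.induce s).Connected)
    (h1 : ∀ x ∈ s, (G.induce (s \ {x})).Connected) : TwoConnected (G.induce s) := by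
  refine ⟨h0, ?_, ?_⟩
  · rwa [Nat.card_coe_set_eq]
  · rintro ⟨x, hx⟩
    exact ((induceDiffIso G s hx).connected_iff).mp (h1 x hx)

private lemma twoConnected_hub [Fintype V] (G : SimpleGraph V) (s : Set V) (a : V) (ha : a ∈ s)
    (h3 : 3 ≤ s.ncard) (hhub : ∀ x ∈ s, x ≠ a → G.Adj a x)
    (hconn : (G.induce (s \ {a})).Connected) : TwoConnected (G.induce s) := by
  refine twoConnected_induce G s h3 (connected_induce_of_hub G s a ha hhub) ?_
  intro x hx
  rcases eq_or_ne x a with rfl | hxa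
  · exact hconn
  · exact connected_induce_of_hub G (s \ {x}) a ⟨ha, hxa.symm⟩
      fun y hy hya => hhub y hy.1 hya

private lemma twoConnected_bip [Fintype V] (G : SimpleGraph V) {s A B : Set V} (hs : A ∪ B = s)
    (hA : 2 ≤ A.ncard) (hB : 2 ≤ B.ncard)
    (hadj : ∀ x ∈ A, ∀ y ∈ B, G.Adj x y) : TwoConnected (G.induce s) := by
  have hdisj : Disjoint A B := by
    rw [Set.disjoint_left]
    intro x hxA hxB
    exact (hadj x hxA x hxB).ne rfl
  have hAne : A.Nonempty := Set.nonempty_of_ncard_ne_zero (by omega)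
  have hBne : B.Nonempty := Set.nonempty_of_ncard_ne_zero (by omega)
  have h3 : 3 ≤ s.ncard := by
    rw [← hs, Set.ncard_union_eq hdisj (Set.toFinite _) (Set.toFinite _)]
    omega
  refine twoConnected_induce G s h3
    (connected_induce_of_bipartite G hs hAne hBne hadj) ?_
  intro x hx
  have hu : (A \ {x}) ∪ (B \ {x}) = s \ {x} := by
    rw [← hs, Set.union_diff_distrib]
  have hA' : (A \ {x}).Nonempty := by
    refine Set.nonempty_of_ncard_ne_zero ?_
    have := Set.pred_ncard_le_ncard_diff_singleton A x
    omega
  have hB' : (B \ {x}).Nonempty := by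
    refine Set.nonempty_of_ncard_ne_zero ?_
    have := Set.pred_ncard_le_ncard_diff_singleton B x
    omega
  exact connected_induce_of_bipartite G hu hA' hB'
    fun y hy z hz => hadj y hy.1 z hz.1

private lemma compl_induce_eq (G : SimpleGraph V) (s : Set V) :
    Gᶜ.induce s = (G.induce s)ᶜ := by
  ext ⟨x, hx⟩ ⟨y, hy⟩
  simp [SimpleGraph.compl_adj, Subtype.ext_iff]

private lemma connected_compl {W : Type*} (H : SimpleGraph W) (hne : Nonempty W)
    (h : ¬ H.Connected) : Hᶜ.Connected := by
  have hpre : ¬ H.Preconnected := fun hp => h ((connected_iff _).mpr ⟨hp, hne⟩)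
  rw [SimpleGraph.Preconnected] at hpre
  push_neg at hpre
  obtain ⟨u, v, huv⟩ := hpre
  have huv' : u ≠ v := fun h => huv (by rw [← h])
  have key : ∀ w, Hᶜ.Reachable w u := by
    intro w
    by_cases h1 : H.Reachable u w
    · have h2 : ¬ H.Adj w v := fun ha => huv (h1.trans ha.reachable)
      have h3 : w ≠ v := fun he => huv (he ▸ h1)
      by_cases h4 : w = u
      · subst h4; exact Reachable.refl w
      · have h5 : Hᶜ.Adj w v := (SimpleGraph.compl_adj _ _ _).mpr ⟨h3, h2⟩
        have h6 : Hᶜ.Adj v u := (SimpleGraph.compl_adj _ _ _).mpr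
          ⟨huv'.symm, fun ha => huv ha.symm.reachable⟩
        exact h5.reachable.trans h6.reachable
    · have hwu : w ≠ u := fun he => h1 (by rw [he])
      have : Hᶜ.Adj w u := (SimpleGraph.compl_adj _ _ _).mpr
        ⟨hwu, fun ha => h1 ha.symm.reachable⟩
      exact this.reachable
  exact (connected_iff _).mpr ⟨fun x y => (key x).trans (key y).symm, hne⟩

private lemma connected_compl_induce (G : SimpleGraph V) (t : Set V) (hne : t.Nonempty)
    (h : ¬ (G.induce t).Connected) : (Gᶜ.induce t).Connected := by
  rw [compl_induce_eq]
  exact connected_compl _ hne.to_subtype h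

private lemma exists_star [Fintype V] {G : SimpleGraph V} {t A B : Set V} (hs : A ∪ B = t)
    (hAne : A.Nonempty) (hBne : B.Nonempty) (hsep : ∀ x ∈ A, ∀ y ∈ B, ¬ G.Adj x y)
    (hsmall : ¬(2 ≤ A.ncard ∧ 2 ≤ B.ncard)) :
    ∃ a ∈ t, ∀ x ∈ t \ {a}, ¬ G.Adj a x := by
  have hA1 : 1 ≤ A.ncard := (Set.ncard_pos (Set.toFinite _)).mpr hAne
  have hB1 : 1 ≤ B.ncard := (Set.ncard_pos (Set.toFinite _)).mpr hBne
  rcases not_and_or.mp hsmall with hsm | hsm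
  · obtain ⟨a, rfl⟩ := Set.ncard_eq_one.mp (by omega : A.ncard = 1)
    refine ⟨a, by rw [← hs]; exact Or.inl rfl, ?_⟩
    rintro x ⟨hxt, hxa⟩
    have hxB : x ∈ B := by
      rcases (show x ∈ {a} ∪ B from by rw [hs]; exact hxt) with h | h
      · exact absurd h hxa
      · exact h
    exact hsep a rfl x hxB
  · obtain ⟨b, rfl⟩ := Set.ncard_eq_one.mp (by omega : B.ncard = 1)
    refine ⟨b, by rw [← hs]; exact Or.inr rfl, ?_⟩
    rintro x ⟨hxt, hxb⟩
    have hxA : x ∈ A := by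
      rcases (show x ∈ A ∪ {b} from by rw [hs]; exact hxt) with h | h
      · exact h
      · exact absurd h hxb
    exact fun h => hsep x hxA b rfl h.symm

end Helpers

/-- If `G` is connected, has at least 5 vertices and is not 2-connected, then either
some set of at most 2 vertices can be removed from `G` leaving a 2-connected graph, or
some set of at most 2 vertices can be removed from `Gᶜ` leaving a 2-connected graph. -/
theorem remove_two_vertices_twoConnected {V : Type*} [Fintype V] (G : SimpleGraph V)
    (hconn : G.Connected) (hcard : 5 ≤ Fintype.card V) (h2 : ¬ TwoConnected G) :
    (∃ S : Set V, S.ncard ≤ 2 ∧ TwoConnected (G.induce Sᶜ)) ∨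
    (∃ S : Set V, S.ncard ≤ 2 ∧ TwoConnected (Gᶜ.induce Sᶜ)) := by
  classical
  have hncV : Nat.card V = Fintype.card V := Nat.card_eq_fintype_card
  -- extract a cut vertex
  obtain ⟨v, hv⟩ : ∃ v, ¬ (G.induce ({v} : Set V)ᶜ).Connected := by
    by_contra h
    push_neg at h
    exact h2 ⟨hconn, by omega, h⟩
  have hvc_card : ({v} : Set V)ᶜ.ncard = Fintype.card V - 1 := by
    have h1 := Set.ncard_add_ncard_compl ({v} : Set V) (Set.toFinite _) (Set.toFinite _)
    rw [Set.ncard_singleton] at h1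
    omega
  have hvcne : ({v} : Set V)ᶜ.Nonempty := Set.nonempty_of_ncard_ne_zero (by omega)
  obtain ⟨A, B, hsAB, hAne, hBne, hABdisj, hsep⟩ := exists_sep G _ hvcne hv
  by_cases hbig : 2 ≤ A.ncard ∧ 2 ≤ B.ncard
  · right
    refine ⟨{v}, by simp, ?_⟩
    refine twoConnected_bip Gᶜ hsAB hbig.1 hbig.2 ?_
    intro x hxA y hyB
    exact (SimpleGraph.compl_adj _ _ _).mpr ⟨hABdisj.ne_of_mem hxA hyB, hsep x hxA y hyB⟩
  · obtain ⟨a, hav, ha⟩ := exists_star hsAB hAne hBne hsep hbig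
    set B2 : Set V := ({v} : Set V)ᶜ \ {a} with hB2def
    have hvna : v ≠ a := fun h => hav (h ▸ rfl)
    have hB2card : B2.ncard = Fintype.card V - 2 := by
      rw [hB2def, Set.ncard_diff_singleton_of_mem hav]
      omega
    have hB2ne : B2.Nonempty := Set.nonempty_of_ncard_ne_zero (by omega)
    have hB2eq : ({v, a} : Set V)ᶜ = B2 := by
      ext z
      simp [hB2def, not_or, and_comm]
    by_cases hc2 : (Gᶜ.induce B2).Connected
    · right
      refine ⟨{v}, by simp, ?_⟩
      refine twoConnected_hub Gᶜ _ a hav (by omega) ?_ hc2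
      intro x hx hxa
      exact (SimpleGraph.compl_adj _ _ _).mpr ⟨hxa.symm, ha x ⟨hx, hxa⟩⟩
    · obtain ⟨B1, B2', hsB, hB1ne, hB2'ne, hBdisj, hsepB⟩ := exists_sep Gᶜ B2 hB2ne hc2
      have hGadj : ∀ x ∈ B1, ∀ y ∈ B2', G.Adj x y := by
        intro x hx y hy
        by_contra h
        exact hsepB x hx y hy ((SimpleGraph.compl_adj _ _ _).mpr ⟨hBdisj.ne_of_mem hx hy, h⟩)
      by_cases hbig2 : 2 ≤ B1.ncard ∧ 2 ≤ B2'.ncard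
      · left
        refine ⟨{v, a}, by rw [Set.ncard_pair hvna], ?_⟩
        rw [hB2eq]
        exact twoConnected_bip G hsB hbig2.1 hbig2.2 hGadj
      · obtain ⟨b, hbB2, hb⟩ := exists_star hsB hB1ne hB2'ne hsepB hbig2
        have hbhub : ∀ x ∈ B2, x ≠ b → G.Adj b x := by
          intro x hx hxb
          by_contra h
          exact hb x ⟨hx, hxb⟩ ((SimpleGraph.compl_adj _ _ _).mpr
            ⟨fun he => hxb he.symm, h⟩)
        set D : Set V := B2 \ {b} with hDdef
        have hDcard : D.ncard = Fintype.card V - 3 := by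
          rw [hDdef, Set.ncard_diff_singleton_of_mem hbB2]
          omega
        have hDne : D.Nonempty := Set.nonempty_of_ncard_ne_zero (by omega)
        by_cases hc4 : (G.induce D).Connected
        · left
          refine ⟨{v, a}, by rw [Set.ncard_pair hvna], ?_⟩
          rw [hB2eq]
          exact twoConnected_hub G B2 b hbB2 (by omega) hbhub hc4
        · right
          have hvnb : v ≠ b := fun h => hbB2.1 (h ▸ rfl)
          have hanb : a ≠ b := fun h => hbB2.2 (h ▸ rfl)
          have hvbcard : ({v, b} : Set V)ᶜ.ncard = Fintype.card V - 2 := by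
            have h1 := Set.ncard_add_ncard_compl ({v, b} : Set V) (Set.toFinite _)
              (Set.toFinite _)
            rw [Set.ncard_pair hvnb] at h1
            omega
          have havb : a ∈ ({v, b} : Set V)ᶜ := by
            simp [not_or]
            exact ⟨fun h => hvna h.symm, hanb⟩
          have hDeq : ({v, b} : Set V)ᶜ \ {a} = D := by
            ext z
            simp [hDdef, hB2def, not_or]
            tauto
          refine ⟨{v, b}, by rw [Set.ncard_pair hvnb], ?_⟩
          refine twoConnected_hub Gᶜ _ a havb (by omega) ?_ ?_
          · intro x hx hxa
            have hxv : x ≠ v := by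
              intro h; exact hx (by simp [h])
            exact (SimpleGraph.compl_adj _ _ _).mpr ⟨hxa.symm, ha x ⟨hxv, hxa⟩⟩
          · rw [hDeq]
            exact connected_compl_induce G D hDne hc4
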